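/- Let K be a field, f(x) ∈ K[x] an irreducible polynomial, and r ≥ 3 an odd positive integer. If f(x^r) is irreducible over K, then f(x^{r^k}) is irreducible over K for every k ≥ 2. -/

import Mathlib

open Polynomial IntermediateField

section Aux

universe u
variable {K : Type u} [Field K]

private lemma aux_monic (f : Polynomial K) (hmon : f.Monic) (hf : Irreducible f)
    (n : ℕ) (hn : Odd n)
    (hp : ∀ p : ℕ, p.Prime → p ∣ n → Irreducible (f.comp (X ^ p))) :
    Irreducible (f.comp (X ^ n)) := by
  have hd : f.natDegree ≠ 0 := fun e ↦
    not_irreducible_C (f.coeff 0) (eq_C_of_natDegree_eq_zero e ▸ hf)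
  apply Polynomial.irreducible_comp hmon (monic_X_pow n) hf
  intro E _ _ x hx
  simp only [Polynomial.map_pow, map_X]
  apply X_pow_sub_C_irreducible_of_odd hn
  intro p hprime hpn b hb
  have hx_int : IsIntegral K x := by
    by_contra h
    rw [minpoly.eq_zero h] at hx
    exact hmon.ne_zero hx.symm
  have hmin_gen : minpoly K (IntermediateField.AdjoinSimple.gen K x) = f := by
    rw [IntermediateField.minpoly_gen, hx]
  have h0 : aeval b (f.comp ((X : Polynomial K) ^ p)) = 0 := by
    rw [aeval_comp]
    simp only [map_pow, aeval_X, hb]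
    rw [← hmin_gen]
    exact minpoly.aeval _ _
  have hmc : (f.comp ((X : Polynomial K) ^ p)).Monic :=
    hmon.comp (monic_X_pow p) (by simp [natDegree_X_pow, hprime.ne_zero])
  have key : minpoly K b = f.comp (X ^ p) :=
    (minpoly.eq_of_irreducible_of_monic (hp p hprime hpn) h0 hmc).symm
  haveI : FiniteDimensional K K⟮x⟯ := IntermediateField.adjoin.finiteDimensional hx_int
  have hle := minpoly.natDegree_le (A := K) b
  rw [key, natDegree_comp, natDegree_X_pow] at hle
  have hfr : Module.finrank K K⟮x⟯ = f.natDegree := by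
    rw [IntermediateField.adjoin.finrank hx_int, hx]
  rw [hfr] at hle
  have := hprime.two_le
  nlinarith [Nat.one_le_iff_ne_zero.mpr hd]

private lemma aux_monic_main (f : Polynomial K) (hmon : f.Monic) (hf : Irreducible f)
    (r : ℕ) (hr : 3 ≤ r) (hodd : Odd r)
    (hirr : Irreducible (f.comp (X ^ r))) (k : ℕ) :
    Irreducible (f.comp (X ^ r ^ k)) := by
  rcases Nat.eq_zero_or_pos k with rfl | hk
  · simpa using hf
  apply aux_monic f hmon hf _ (hodd.pow)
  intro p hprime hpk
  have hpr : p ∣ r := hprime.dvd_of_dvd_pow hpk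
  obtain ⟨m, hm⟩ := hpr
  have hm0 : m ≠ 0 := by rintro rfl; omega
  have : f.comp (X ^ r) = expand K m (expand K p f) := by
    rw [expand_expand, ← expand_eq_comp_X_pow, hm, mul_comm]
  rw [this] at hirr
  have := Polynomial.of_irreducible_expand hm0 hirr
  rwa [expand_eq_comp_X_pow] at this

end Aux

theorem irreducible_comp_X_pow_tower (K : Type*) [Field K] (f : Polynomial K)
    (hf : Irreducible f) (r : ℕ) (hr : 3 ≤ r) (hodd : Odd r)
    (hirr : Irreducible (f.comp (X ^ r))) :
    ∀ k : ℕ, 2 ≤ k → Irreducible (f.comp (X ^ r ^ k)) := by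
  intro k hk
  set c := f.leadingCoeff with hc
  have hc0 : c ≠ 0 := leadingCoeff_ne_zero.mpr hf.ne_zero
  set f₀ := C c⁻¹ * f with hf₀
  have hu : IsUnit (C c⁻¹ : Polynomial K) := isUnit_C.mpr (isUnit_iff_ne_zero.mpr (inv_ne_zero hc0))
  have hmon : f₀.Monic := by
    simpa [hf₀, mul_comm] using monic_mul_leadingCoeff_inv (p := f) hf.ne_zero
  have hf₀irr : Irreducible f₀ := (irreducible_isUnit_mul hu).mpr hf
  have hcomp : ∀ n : ℕ, f₀.comp (X ^ n) = C c⁻¹ * f.comp (X ^ n) := by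
    intro n; rw [hf₀, mul_comp, C_comp]
  have hirr₀ : Irreducible (f₀.comp (X ^ r)) := by
    rw [hcomp]; exact (irreducible_isUnit_mul hu).mpr hirr
  have := aux_monic_main f₀ hmon hf₀irr r hr hodd hirr₀ k
  rw [hcomp] at this
  exact (irreducible_isUnit_mul hu).mp this
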